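/- Let f be a finite measurable function on (X, 𝒳, μ, T). If sup_{n≥0} |∑_{i=0}^{n} f∘T^i| < +∞ μ-almost everywhere, then there exists a bounded measurable function g : X → ℝ such that f = g − g∘T μ-almost everywhere. -/

import Mathlib

open MeasureTheory Filter Topology

/-- Ergodic sweeping: a.e. point enters a positive-measure set under some positive iterate. -/
private lemma ergodic_sweep {X : Type*} [MeasurableSpace X] (μ : Measure X)
    [IsProbabilityMeasure μ] {T : X → X} (hT : Ergodic T μ) {D : Set X}
    (hD : MeasurableSet D) (hpos : μ D ≠ 0) :
    ∀ᵐ x ∂μ, ∃ n : ℕ, T^[n+1] x ∈ D := by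
  set U : Set X := ⋃ n : ℕ, T^[n+1] ⁻¹' D with hU
  have hTm : Measurable T := hT.toMeasurePreserving.measurable
  have hUm : MeasurableSet U := MeasurableSet.iUnion fun n => (hTm.iterate (n+1)) hD
  have hsub : T ⁻¹' U ⊆ U := by
    intro x hx
    simp only [hU, Set.mem_iUnion, Set.mem_preimage] at hx ⊢
    obtain ⟨n, hn⟩ := hx
    exact ⟨n+1, by rwa [Function.iterate_succ_apply]⟩
  rcases hT.ae_empty_or_univ_of_preimage_ae_le hUm.nullMeasurableSet hsub.eventuallyLE with h | h
  · exfalso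
    have h0 : μ U = 0 := by
      calc μ U = μ (∅ : Set X) := measure_congr h
      _ = 0 := measure_empty
    have h1 : μ (T^[0+1] ⁻¹' D) ≤ μ U :=
      measure_mono (Set.subset_iUnion (fun n => T^[n+1] ⁻¹' D) 0)
    have h2 : μ (T^[0+1] ⁻¹' D) = μ D :=
      (hT.toMeasurePreserving.iterate 1).measure_preimage hD.nullMeasurableSet
    rw [h0, h2] at h1
    exact hpos (le_antisymm (le_of_le_of_eq h1 rfl) (zero_le))
  · have : ∀ᵐ x ∂μ, x ∈ U := mem_ae_iff.2 (ae_eq_univ.1 h)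
    filter_upwards [this] with x hx
    simpa only [hU, Set.mem_iUnion, Set.mem_preimage] using hx

/-- Let `f` be a finite measurable function on an ergodic invertible
probability-preserving system `(X, μ, T)`. If `sup_{n≥0} |∑_{i=0}^n f ∘ T^i| < +∞`
almost everywhere, then `f` is a bounded coboundary: there is a bounded measurable
function `g` with `f = g - g ∘ T` almost everywhere. -/
theorem bounded_partial_sums_implies_bounded_coboundary
    {X : Type*} [MeasurableSpace X] (μ : Measure X) [IsProbabilityMeasure μ]
    (T : Equiv.Perm X) (hTmeas : Measurable (⇑T)) (hTmeas' : Measurable (⇑T.symm))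
    (hT : Ergodic (⇑T) μ)
    (f : X → ℝ) (hf : Measurable f)
    (hbdd : ∀ᵐ x ∂μ, BddAbove (Set.range fun n : ℕ =>
      |∑ i ∈ Finset.range (n + 1), f ((T ^ i) x)|)) :
    ∃ g : X → ℝ, Measurable g ∧ (∃ C : ℝ, ∀ x, |g x| ≤ C) ∧
      ∀ᵐ x ∂μ, f x = g x - g (T x) := by
  classical
  have hae : (ae μ).NeBot := ae_neBot.mpr (IsProbabilityMeasure.ne_zero μ)
  -- powers of T as iterates
  have hpow : ∀ n : ℕ, ⇑(T ^ n) = (⇑T)^[n] := by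
    intro n
    induction n with
    | zero => simp
    | succ n ih =>
      funext x
      rw [pow_succ, Equiv.Perm.mul_apply, ih, Function.iterate_succ_apply]
  have hTn : ∀ n : ℕ, Measurable ⇑(T ^ n) := fun n => (hpow n) ▸ hTmeas.iterate n
  have hMPn : ∀ n : ℕ, MeasurePreserving ⇑(T ^ n) μ μ := fun n =>
    (hpow n) ▸ hT.toMeasurePreserving.iterate n
  have hstep : ∀ (x : X) (i : ℕ), (T ^ (i+1)) x = (T ^ i) (T x) := by
    intro x i; rw [pow_succ, Equiv.Perm.mul_apply]
  -- the transfer function candidate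
  set g : X → ℝ := fun x =>
    Filter.limsup (fun n => ∑ i ∈ Finset.range (n + 1), f ((T ^ i) x)) Filter.atTop with hgdef
  have hSmeas : ∀ n : ℕ, Measurable fun x => ∑ i ∈ Finset.range (n + 1), f ((T ^ i) x) :=
    fun n => Finset.measurable_sum _ fun i _ => hf.comp (hTn i)
  have hg : Measurable g := Measurable.limsup hSmeas
  -- pointwise bound in convenient form
  have hbddP : ∀ᵐ x ∂μ, ∃ M : ℝ, ∀ n : ℕ,
      |∑ i ∈ Finset.range (n + 1), f ((T ^ i) x)| ≤ M := by
    filter_upwards [hbdd] with x hx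
    obtain ⟨M, hM⟩ := hx
    exact ⟨M, fun n => hM (Set.mem_range_self n)⟩
  -- shift identity for partial sums
  have hshift : ∀ (x : X) (n : ℕ),
      (∑ i ∈ Finset.range (n + 1 + 1), f ((T ^ i) x))
        = f x + ∑ i ∈ Finset.range (n + 1), f ((T ^ i) (T x)) := by
    intro x n
    rw [Finset.sum_range_succ']
    have hc : ∀ i ∈ Finset.range (n+1), f ((T ^ (i+1)) x) = f ((T ^ i) (T x)) :=
      fun i _ => by rw [hstep]
    rw [Finset.sum_congr rfl hc, add_comm]
    simp
  -- cocycle relation a.e.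
  have hbdd2 : ∀ᵐ x ∂μ, ∃ M : ℝ, ∀ n : ℕ,
      |∑ i ∈ Finset.range (n + 1), f ((T ^ i) (T x))| ≤ M :=
    hT.quasiMeasurePreserving.tendsto_ae.eventually hbddP
  have hcoc : ∀ᵐ x ∂μ, g x = f x + g (T x) := by
    filter_upwards [hbddP, hbdd2] with x hx hx'
    obtain ⟨M', hM'⟩ := hx'
    have hb : IsBoundedUnder (· ≤ ·) atTop
        (fun n => ∑ i ∈ Finset.range (n + 1), f ((T ^ i) (T x))) :=
      isBoundedUnder_of ⟨M', fun n => (le_abs_self _).trans (hM' n)⟩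
    have hb' : IsBoundedUnder (· ≥ ·) atTop
        (fun n => ∑ i ∈ Finset.range (n + 1), f ((T ^ i) (T x))) :=
      isBoundedUnder_of ⟨-M', fun n => neg_le_of_abs_le (hM' n)⟩
    have hcob : IsCoboundedUnder (· ≤ ·) atTop
        (fun n => ∑ i ∈ Finset.range (n + 1), f ((T ^ i) (T x))) :=
      hb'.isCoboundedUnder_le
    calc g x = Filter.limsup
          (fun n => ∑ i ∈ Finset.range (n + 1 + 1), f ((T ^ i) x)) Filter.atTop := by
          rw [hgdef]
          exact (limsup_nat_add (fun n => ∑ i ∈ Finset.range (n + 1), f ((T ^ i) x)) 1).symm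
      _ = Filter.limsup
          (fun n => f x + ∑ i ∈ Finset.range (n + 1), f ((T ^ i) (T x))) Filter.atTop := by
          congr 1; funext n; exact hshift x n
      _ = f x + g (T x) := limsup_const_add atTop _ _ hb hcob
  -- iterated cocycle relation a.e.
  have hcoc_iter : ∀ᵐ x ∂μ, ∀ k : ℕ, g ((T ^ k) x) = f ((T ^ k) x) + g (T ((T ^ k) x)) := by
    rw [ae_all_iff]
    intro k
    exact (hMPn k).quasiMeasurePreserving.tendsto_ae.eventually hcoc
  have hit : ∀ᵐ x ∂μ, ∀ n : ℕ,
      g x - g ((T ^ (n+1)) x) = ∑ i ∈ Finset.range (n + 1), f ((T ^ i) x) := by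
    filter_upwards [hcoc_iter] with x hx
    intro n
    induction n with
    | zero =>
      have h0 := hx 0
      simp only [pow_zero, Equiv.Perm.coe_one, id_eq] at h0
      simp only [zero_add, pow_one, Finset.range_one, Finset.sum_singleton, pow_zero,
        Equiv.Perm.coe_one, id_eq]
      linarith
    | succ n ih =>
      have h1 := hx (n+1)
      have h2 : (T ^ (n+1+1)) x = T ((T ^ (n+1)) x) := by
        rw [pow_succ', Equiv.Perm.mul_apply]
      rw [← h2] at h1
      rw [Finset.sum_range_succ]
      linarith
  -- the transfer function is essentially bounded
  have hbound : ∃ C : ℝ, ∀ᵐ x ∂μ, |g x| ≤ C := by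
    by_contra hcon
    push_neg at hcon
    have hpos : ∀ K : ℕ, μ {x | (K : ℝ) < |g x|} ≠ 0 := by
      intro K hK0
      refine hcon K ?_
      rw [ae_iff]
      have hset : {x | ¬ |g x| ≤ (K : ℝ)} = {x | (K : ℝ) < |g x|} := by
        ext x; simp [not_le]
      simpa only [not_not] using hK0
    have hDm : ∀ K : ℕ, MeasurableSet {x | (K : ℝ) < |g x|} :=
      fun K => measurableSet_lt measurable_const hg.abs
    have hsweep : ∀ᵐ x ∂μ, ∀ K : ℕ, ∃ n : ℕ, (K : ℝ) < |g ((⇑T)^[n+1] x)| := by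
      rw [ae_all_iff]
      intro K
      exact ergodic_sweep μ hT (hDm K) (hpos K)
    obtain ⟨x, ⟨M, hM⟩, hitx, hswx⟩ := ((hbddP.and (hit.and hsweep)).exists :
      ∃ x, (∃ M : ℝ, ∀ n : ℕ, |∑ i ∈ Finset.range (n + 1), f ((T ^ i) x)| ≤ M) ∧
        (∀ n : ℕ, g x - g ((T ^ (n+1)) x) = ∑ i ∈ Finset.range (n + 1), f ((T ^ i) x)) ∧
        (∀ K : ℕ, ∃ n : ℕ, (K : ℝ) < |g ((⇑T)^[n+1] x)|))
    obtain ⟨n, hn⟩ := hswx ⌈M + |g x|⌉₊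
    have hK : M + |g x| ≤ (⌈M + |g x|⌉₊ : ℝ) := Nat.le_ceil _
    rw [← hpow (n+1)] at hn
    have h1 : |g ((T ^ (n+1)) x)| - |g x| ≤ |g x - g ((T ^ (n+1)) x)| := by
      rw [abs_sub_comm]
      exact abs_sub_abs_le_abs_sub _ _
    rw [hitx n] at h1
    have h2 : |∑ i ∈ Finset.range (n + 1), f ((T ^ i) x)| ≤ M := hM n
    linarith
  -- finish: truncate g on the null exceptional set
  obtain ⟨C, hC⟩ := hbound
  refine ⟨fun x => if |g x| ≤ C then g x else 0, ?_, ⟨max C 0, ?_⟩, ?_⟩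
  · exact Measurable.ite (measurableSet_le hg.abs measurable_const) hg measurable_const
  · intro x
    show |if |g x| ≤ C then g x else 0| ≤ max C 0
    by_cases h : |g x| ≤ C
    · rw [if_pos h]; exact h.trans (le_max_left _ _)
    · rw [if_neg h]; simpa using le_max_right C 0
  · have hC2 : ∀ᵐ x ∂μ, |g (T x)| ≤ C :=
      hT.quasiMeasurePreserving.tendsto_ae.eventually hC
    filter_upwards [hC, hC2, hcoc] with x h1 h2 h3
    show f x = (if |g x| ≤ C then g x else 0) - (if |g (T x)| ≤ C then g (T x) else 0)
    rw [if_pos h1, if_pos h2]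
    linarith
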